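/- Let (Ω, F, P) be a probability space, let p be a positive integer, and let Γ̂_n, δ̂_n : Ω → ℝ^p be sequences of random vectors. Suppose there exist α ∈ ℝ^p, γ ∈ ℝ and δ* ∈ ℝ^p with δ*_j ≠ 0 for all j, such that Γ̂_n converges in probability to α + γ δ* and δ̂_n converges in probability to δ*. Suppose moreover that |{j : α_j ≠ 0}| < p/2. Define π̂_{n,j} = Γ̂_{n,j} / δ̂_{n,j} (on the event δ̂_{n,j} ≠ 0) and γ̂_n^m = median(π̂_{n,1}, …, π̂_{n,p}). Then γ̂_n^m converges in probability to γ. -/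

import Mathlib

/-- The median of a vector `v ∈ ℝ^p`, defined via the nondecreasing rearrangement
`v₍₁₎ ≤ ⋯ ≤ v₍ₚ₎` as `v₍₍ₚ₊₁₎/₂₎` if `p` is odd and `(v₍ₚ/₂₎ + v₍ₚ/₂₊₁₎)/2` if `p`
is even (and `0` by convention when `p = 0`). -/
noncomputable def median : {p : ℕ} → (Fin p → ℝ) → ℝ
  | 0, _ => 0
  | (q + 1), v =>
    let w : Fin (q + 1) → ℝ := v ∘ Tuple.sort v
    if (q + 1) % 2 = 1 then w ⟨(q + 1) / 2, by omega⟩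
    else (w ⟨(q + 1) / 2 - 1, by omega⟩ + w ⟨(q + 1) / 2, by omega⟩) / 2

open MeasureTheory Filter Finset Topology

lemma sorted_le_of_lt_card {m : ℕ} {w : Fin m → ℝ} (hw : Monotone w) {b : ℝ} {j : Fin m}
    (h : (j : ℕ) < (univ.filter fun i => w i ≤ b).card) : w j ≤ b := by
  by_contra hc
  push_neg at hc
  have hsub : (univ.filter fun i => w i ≤ b) ⊆ Finset.Iio j := by
    intro i hi
    simp only [mem_filter, mem_univ, true_and] at hi
    simp only [Finset.mem_Iio]
    by_contra hij
    exact absurd ((hw (le_of_not_gt hij)).trans hi) (not_le.mpr hc)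
  have := Finset.card_le_card hsub
  rw [Fin.card_Iio] at this
  omega

lemma sorted_ge_of_card_le {m : ℕ} {w : Fin m → ℝ} (hw : Monotone w) {a : ℝ} {j : Fin m}
    (h : (univ.filter fun i => w i < a).card ≤ (j : ℕ)) : a ≤ w j := by
  by_contra hc
  push_neg at hc
  have hsub : Finset.Iic j ⊆ (univ.filter fun i => w i < a) := by
    intro i hi
    simp only [Finset.mem_Iic] at hi
    simp only [mem_filter, mem_univ, true_and]
    exact lt_of_le_of_lt (hw hi) hc
  have := Finset.card_le_card hsub
  rw [Fin.card_Iic] at this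
  omega

lemma card_filter_comp_perm {m : ℕ} (σ : Equiv.Perm (Fin m)) (Q : ℝ → Prop) [DecidablePred Q]
    (v : Fin m → ℝ) :
    (univ.filter fun i => Q (v (σ i))).card = (univ.filter fun j => Q (v j)).card := by
  apply Finset.card_bij (fun i _ => σ i)
  · intro i hi
    simp only [mem_filter, mem_univ, true_and] at hi ⊢
    exact hi
  · intro i _ i' _ h
    exact σ.injective h
  · intro j hj
    refine ⟨σ.symm j, ?_, by simp⟩
    simp only [mem_filter, mem_univ, true_and, Equiv.apply_symm_apply] at hj ⊢
    exact hj

lemma median_mem_Icc {m : ℕ} (v : Fin m → ℝ) {a b : ℝ}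
    (h : m < 2 * (univ.filter fun j => v j ∈ Set.Icc a b).card) :
    median v ∈ Set.Icc a b := by
  obtain _ | q := m
  · simp at h
  set σ := Tuple.sort v with hσ
  set w : Fin (q + 1) → ℝ := v ∘ σ with hwdef
  have hw : Monotone w := Tuple.monotone_sort v
  set M := (univ.filter fun j => v j ∈ Set.Icc a b).card with hM
  have hMw : (univ.filter fun i => w i ∈ Set.Icc a b).card = M := by
    exact card_filter_comp_perm σ (fun x => x ∈ Set.Icc a b) v
  have h1 : M ≤ (univ.filter fun i => w i ≤ b).card := by
    rw [← hMw]
    apply Finset.card_le_card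
    intro i hi
    simp only [mem_filter, mem_univ, true_and, Set.mem_Icc] at hi ⊢
    exact hi.2
  have h2 : (univ.filter fun i => w i < a).card ≤ (q + 1) - M := by
    have hdisj : Disjoint (univ.filter fun i => w i < a)
        (univ.filter fun i => w i ∈ Set.Icc a b) := by
      rw [Finset.disjoint_filter]
      intro i _ hi hi2
      exact absurd hi2.1 (not_le.mpr hi)
    have := Finset.card_union_of_disjoint hdisj
    have hle := Finset.card_le_card (Finset.subset_univ
      ((univ.filter fun i => w i < a) ∪ (univ.filter fun i => w i ∈ Set.Icc a b)))
    rw [this, hMw] at hle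
    simp only [Finset.card_univ, Fintype.card_fin] at hle
    omega
  have hkey : ∀ j : Fin (q + 1), (q + 1) - M ≤ (j : ℕ) → (j : ℕ) < M → w j ∈ Set.Icc a b := by
    intro j hj1 hj2
    exact ⟨sorted_ge_of_card_le hw (le_trans h2 hj1),
      sorted_le_of_lt_card hw (lt_of_lt_of_le hj2 h1)⟩
  show median v ∈ Set.Icc a b
  rw [median]
  split_ifs with hpar
  · exact hkey _ (by simp; omega) (by simp; omega)
  · have e0 := hkey ⟨(q + 1) / 2 - 1, by omega⟩ (by simp; omega) (by simp; omega)
    have e1 := hkey ⟨(q + 1) / 2, by omega⟩ (by simp; omega) (by simp; omega)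
    obtain ⟨ha0, hb0⟩ := e0
    obtain ⟨ha1, hb1⟩ := e1
    exact ⟨by linarith, by linarith⟩


lemma tendstoInMeasure_div_const {Ω : Type*} [MeasurableSpace Ω] (P : Measure Ω)
    {X Y : ℕ → Ω → ℝ} {a b : ℝ} (hb : b ≠ 0)
    (hX : TendstoInMeasure P X atTop fun _ => a)
    (hY : TendstoInMeasure P Y atTop fun _ => b) :
    TendstoInMeasure P (fun n ω => X n ω / Y n ω) atTop (fun _ => a / b) := by
  rw [tendstoInMeasure_iff_dist]
  intro ε hε
  have hf : ContinuousAt (fun q : ℝ × ℝ => q.1 / q.2) (a, b) :=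
    ContinuousAt.div continuousAt_fst continuousAt_snd hb
  rw [Metric.continuousAt_iff] at hf
  obtain ⟨δ, hδ0, hδ⟩ := hf ε hε
  have key : ∀ n, {ω | ε ≤ dist (X n ω / Y n ω) (a / b)} ⊆
      {ω | δ ≤ dist (X n ω) a} ∪ {ω | δ ≤ dist (Y n ω) b} := by
    intro n ω hω
    by_contra hc
    simp only [Set.mem_union, Set.mem_setOf_eq, not_or, not_le] at hc
    have hd : dist ((X n ω, Y n ω)) ((a, b)) < δ := by
      rw [Prod.dist_eq]; exact max_lt hc.1 hc.2
    exact absurd (hδ hd) (not_lt.mpr hω)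
  have hbound : ∀ n, P {ω | ε ≤ dist (X n ω / Y n ω) (a / b)} ≤
      P {ω | δ ≤ dist (X n ω) a} + P {ω | δ ≤ dist (Y n ω) b} := fun n =>
    le_trans (measure_mono (key n)) (measure_union_le _ _)
  have h0 : Tendsto (fun n => P {ω | δ ≤ dist (X n ω) a} + P {ω | δ ≤ dist (Y n ω) b})
      atTop (𝓝 0) := by
    simpa using (tendstoInMeasure_iff_dist.mp hX δ hδ0).add (tendstoInMeasure_iff_dist.mp hY δ hδ0)
  exact tendsto_of_tendsto_of_tendsto_of_le_of_le tendsto_const_nhds h0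
    (fun n => zero_le) hbound

/-- **Consistency of the median ratio estimator (Lemma 1).**
If `Γ̂_n →ᵖ α + γ δ*` and `δ̂_n →ᵖ δ*` coordinatewise, with every `δ*_j ≠ 0` and
fewer than `p/2` nonzero coordinates of `α` (the majority validity rule), then the
median `γ̂ₙᵐ = median(Γ̂_{n,1}/δ̂_{n,1}, …, Γ̂_{n,p}/δ̂_{n,p})` of the ratio
estimators converges in probability to `γ`. -/
theorem median_ratio_estimator_consistent
    {Ω : Type*} [MeasurableSpace Ω] (P : Measure Ω) [IsProbabilityMeasure P]
    {p : ℕ} (hp : 0 < p)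
    (Γhat δhat : ℕ → Ω → Fin p → ℝ)
    (α δstar : Fin p → ℝ) (γ : ℝ)
    (hδ : ∀ j, δstar j ≠ 0)
    (hΓ : ∀ j, TendstoInMeasure P (fun n ω => Γhat n ω j) atTop
      (fun _ => α j + γ * δstar j))
    (hδc : ∀ j, TendstoInMeasure P (fun n ω => δhat n ω j) atTop
      (fun _ => δstar j))
    (hmaj : 2 * (Finset.univ.filter fun j => α j ≠ 0).card < p) :
    TendstoInMeasure P
      (fun n ω => median (fun j => Γhat n ω j / δhat n ω j)) atTop
      (fun _ => γ) := by
  have hcard : (univ.filter fun j => α j = 0).card + (univ.filter fun j => α j ≠ 0).card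
      = p := by
    simpa using Finset.card_filter_add_card_filter_not
      (s := (univ : Finset (Fin p))) (p := fun j => α j = 0)
  set S : Finset (Fin p) := univ.filter (fun j => α j = 0) with hS
  have hScard : p < 2 * S.card := by omega
  have hπ : ∀ j ∈ S, TendstoInMeasure P (fun n ω => Γhat n ω j / δhat n ω j) atTop
      (fun _ => γ) := by
    intro j hj
    have hα : α j = 0 := (Finset.mem_filter.mp hj).2
    have := tendstoInMeasure_div_const P (hδ j) (hΓ j) (hδc j)
    rw [hα] at this
    simpa [mul_div_assoc, div_self (hδ j)] using this
  rw [tendstoInMeasure_iff_dist]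
  intro ε hε
  have hkey : ∀ n, {ω | ε ≤ dist (median (fun j => Γhat n ω j / δhat n ω j)) γ} ⊆
      ⋃ j ∈ S, {ω | ε / 2 ≤ dist (Γhat n ω j / δhat n ω j) γ} := by
    intro n ω hω
    by_contra hc
    simp only [Set.mem_iUnion, Set.mem_setOf_eq, not_exists, not_le] at hc
    have hcount : p < 2 * (univ.filter fun j =>
        (Γhat n ω j / δhat n ω j) ∈ Set.Icc (γ - ε / 2) (γ + ε / 2)).card := by
      refine lt_of_lt_of_le hScard (by
        apply Nat.mul_le_mul_left
        apply Finset.card_le_card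
        intro j hj
        simp only [mem_filter, mem_univ, true_and, Set.mem_Icc]
        have := hc j hj
        rw [Real.dist_eq, abs_lt] at this
        constructor <;> linarith)
    have hmed := median_mem_Icc (fun j => Γhat n ω j / δhat n ω j) hcount
    rw [Set.mem_Icc] at hmed
    rw [Set.mem_setOf_eq, Real.dist_eq] at hω
    have habs : |(median fun j => Γhat n ω j / δhat n ω j) - γ| ≤ ε / 2 :=
      abs_le.mpr ⟨by linarith [hmed.1], by linarith [hmed.2]⟩
    linarith
  have hbound : ∀ n, P {ω | ε ≤ dist (median (fun j => Γhat n ω j / δhat n ω j)) γ} ≤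
      ∑ j ∈ S, P {ω | ε / 2 ≤ dist (Γhat n ω j / δhat n ω j) γ} := fun n =>
    le_trans (measure_mono (hkey n)) (measure_biUnion_finset_le _ _)
  have hsum : Tendsto (fun n => ∑ j ∈ S,
      P {ω | ε / 2 ≤ dist (Γhat n ω j / δhat n ω j) γ}) atTop (𝓝 0) := by
    have := tendsto_finset_sum S (fun j hj => tendstoInMeasure_iff_dist.mp (hπ j hj) (ε / 2) (half_pos hε))
    simpa using this
  exact tendsto_of_tendsto_of_tendsto_of_le_of_le tendsto_const_nhds hsum
    (fun n => zero_le) hbound
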